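/- (Bounds on unstable eigenvalues.) Let δ, c ∈ ℝ, let b : ℝ → ℝ be continuous and bounded, set M := sup_{x∈ℝ}|b(x)|, and let λ ∈ ℂ. Suppose u : ℝ → ℂ is of class C⁴, the functions u, u', u'', u''', u'''' all belong to L²(ℝ), ‖u‖_{L²(ℝ)} = 1, and −δ²u''''(x) + u''(x) + cu'(x) + b(x)u(x) = λu(x) for all x ∈ ℝ. Then Re λ ≤ M and (Im λ)² ≤ c²·(M − Re λ). -/

import Mathlib

open MeasureTheory Complex ComplexConjugate

lemma memL2_conj {f : ℝ → ℂ} (hf : MemLp f 2 (volume : Measure ℝ)) :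
    MemLp (fun x => conj (f x)) 2 (volume : Measure ℝ) :=
  ⟨Complex.continuous_conj.comp_aestronglyMeasurable hf.1, by
    simpa using (eLpNorm_conj f 2 volume) ▸ hf.2⟩

lemma int_mul {f g : ℝ → ℂ} (hf : MemLp f 2 (volume : Measure ℝ))
    (hg : MemLp g 2 (volume : Measure ℝ)) :
    Integrable (fun x => f x * g x) volume := by
  rw [← memLp_one_iff_integrable]
  have h := MemLp.smul (φ := f) (r := 1) hg hf (hpqr := ⟨by norm_num [ENNReal.inv_two_add_inv_two]⟩)
  exact h

lemma int_mul_conj {f g : ℝ → ℂ} (hf : MemLp f 2 (volume : Measure ℝ))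
    (hg : MemLp g 2 (volume : Measure ℝ)) :
    Integrable (fun x => f x * conj (g x)) volume :=
  int_mul hf (memL2_conj hg)

lemma ibp {f g f' g' : ℝ → ℂ}
    (hf : ∀ x, HasDerivAt f (f' x) x) (hg : ∀ x, HasDerivAt g (g' x) x)
    (mf : MemLp f 2 (volume : Measure ℝ)) (mf' : MemLp f' 2 (volume : Measure ℝ))
    (mg : MemLp g 2 (volume : Measure ℝ)) (mg' : MemLp g' 2 (volume : Measure ℝ)) :
    ∫ x, f x * g' x = - ∫ x, f' x * g x :=
  integral_mul_deriv_eq_deriv_mul_of_integrable (fun x _ => hf x) (fun x _ => hg x) (int_mul mf mg') (int_mul mf' mg)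
    (int_mul mf mg)

lemma ibp_conj {f g f' g' : ℝ → ℂ}
    (hf : ∀ x, HasDerivAt f (f' x) x) (hg : ∀ x, HasDerivAt g (g' x) x)
    (mf : MemLp f 2 (volume : Measure ℝ)) (mf' : MemLp f' 2 (volume : Measure ℝ))
    (mg : MemLp g 2 (volume : Measure ℝ)) (mg' : MemLp g' 2 (volume : Measure ℝ)) :
    ∫ x, f x * conj (g' x) = - ∫ x, f' x * conj (g x) := by
  have hcg : ∀ x, HasDerivAt (fun y => conj (g y)) (conj (g' x)) x := fun x => (hg x).star
  exact ibp hf hcg mf mf' (memL2_conj mg) (memL2_conj mg')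

theorem stmt12 (δ c : ℝ) (b : ℝ → ℝ) (hb : Continuous b) (M : ℝ)
    (hM : IsLUB (Set.range fun x => |b x|) M)
    (lam : ℂ) (u : ℝ → ℂ) (hu : ContDiff ℝ 4 u)
    (hL2 : ∀ j ≤ 4, MemLp (iteratedDeriv j u) 2 volume)
    (hnorm : ∫ x : ℝ, ‖u x‖ ^ 2 = 1)
    (hode : ∀ x : ℝ,
      -(δ : ℂ) ^ 2 * iteratedDeriv 4 u x + iteratedDeriv 2 u x
          + (c : ℂ) * deriv u x + (b x : ℂ) * u x = lam * u x) :
    lam.re ≤ M ∧ lam.im ^ 2 ≤ c ^ 2 * (M - lam.re) := by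
  have hbM : ∀ x, |b x| ≤ M := fun x => hM.1 ⟨x, rfl⟩
  have m0 : MemLp u 2 (volume : Measure ℝ) := by
    simpa [iteratedDeriv_zero] using hL2 0 (by norm_num)
  have m1 := hL2 1 (by norm_num)
  have m2 := hL2 2 (by norm_num)
  have m3 := hL2 3 (by norm_num)
  have m4 := hL2 4 le_rfl
  have hD : ∀ j : ℕ, j < 4 → ∀ x : ℝ,
      HasDerivAt (iteratedDeriv j u) (iteratedDeriv (j+1) u x) x := by
    intro j hj x
    rw [iteratedDeriv_succ]
    exact ((hu.differentiable_iteratedDeriv j (by exact_mod_cast hj)) x).hasDerivAt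
  have hD0 : ∀ x : ℝ, HasDerivAt u (iteratedDeriv 1 u x) x := by
    simpa [iteratedDeriv_zero] using hD 0 (by norm_num)
  set U1 := iteratedDeriv 1 u with hU1
  set U2 := iteratedDeriv 2 u with hU2
  set U3 := iteratedDeriv 3 u with hU3
  set U4 := iteratedDeriv 4 u with hU4
  set P := ∫ x, U1 x * (starRingEnd ℂ) (u x) with hP
  set I1 := ∫ x, Complex.normSq (U1 x) with hI1def
  set I2 := ∫ x, Complex.normSq (U2 x) with hI2def
  set B := ∫ x, b x * Complex.normSq (u x) with hBdef
  have hN : ∫ x, Complex.normSq (u x) = 1 := by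
    simp_rw [← Complex.sq_norm]; exact hnorm
  -- complex-valued integrals of products with conjugates
  have e11 : ∫ x, U1 x * (starRingEnd ℂ) (U1 x) = (I1 : ℂ) := by
    simp_rw [Complex.mul_conj]; exact integral_ofReal
  have e22 : ∫ x, U2 x * (starRingEnd ℂ) (U2 x) = (I2 : ℂ) := by
    simp_rw [Complex.mul_conj]; exact integral_ofReal
  have e00' : ∫ x, u x * (starRingEnd ℂ) (u x) = ((∫ x, Complex.normSq (u x) : ℝ) : ℂ) := by
    simp_rw [Complex.mul_conj]; exact integral_ofReal
  have e00 : ∫ x, u x * (starRingEnd ℂ) (u x) = (1 : ℂ) := by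
    rw [e00', hN]; norm_num
  -- integration by parts identities
  have ibp1 : ∀ {f g f' g' : ℝ → ℂ}, (∀ x, HasDerivAt f (f' x) x) →
      (∀ x, HasDerivAt g (g' x) x) → MemLp f 2 volume → MemLp f' 2 volume →
      MemLp g 2 volume → MemLp g' 2 volume →
      ∫ x, f' x * (starRingEnd ℂ) (g x) = - ∫ x, f x * (starRingEnd ℂ) (g' x) := by
    intro f g f' g' hf hg mf mf' mg mg'
    have h := ibp_conj hf hg mf mf' mg mg'
    linear_combination h
  have h20 : ∫ x, U2 x * (starRingEnd ℂ) (u x) = -(I1 : ℂ) := by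
    rw [ibp1 (hD 1 (by norm_num)) hD0 m1 m2 m0 m1, e11]
  have h31 : ∫ x, U3 x * (starRingEnd ℂ) (U1 x) = -(I2 : ℂ) := by
    rw [ibp1 (hD 2 (by norm_num)) (hD 1 (by norm_num)) m2 m3 m1 m2, e22]
  have h40 : ∫ x, U4 x * (starRingEnd ℂ) (u x) = (I2 : ℂ) := by
    rw [ibp1 (hD 3 (by norm_num)) hD0 m3 m4 m0 m1, h31]; ring
  -- P is purely imaginary
  have hPre : P.re = 0 := by
    have hc : ∫ x, u x * (starRingEnd ℂ) (U1 x) = -P :=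
      ibp_conj hD0 hD0 m0 m1 m0 m1
    have hcc : (starRingEnd ℂ) P = -P := by
      rw [hP, ← integral_conj]
      simp_rw [map_mul, Complex.conj_conj]
      rw [← hc]
      exact integral_congr_ae (Filter.Eventually.of_forall fun x => mul_comm _ _)
    have := congrArg Complex.re hcc
    simp only [Complex.conj_re, Complex.neg_re] at this
    linarith
  -- integrability of the products
  have A4 : Integrable (fun x => U4 x * (starRingEnd ℂ) (u x)) volume := int_mul_conj m4 m0
  have A2 : Integrable (fun x => U2 x * (starRingEnd ℂ) (u x)) volume := int_mul_conj m2 m0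
  have A1 : Integrable (fun x => U1 x * (starRingEnd ℂ) (u x)) volume := int_mul_conj m1 m0
  have A0 : Integrable (fun x => u x * (starRingEnd ℂ) (u x)) volume := int_mul_conj m0 m0
  have Ab : Integrable (fun x => (b x : ℂ) * (u x * (starRingEnd ℂ) (u x))) volume := by
    refine A0.bdd_mul (c := M) ?_ (Filter.Eventually.of_forall fun x => ?_)
    · exact (Complex.continuous_ofReal.comp hb).aestronglyMeasurable
    · simpa using hbM x
  -- the main identity
  have hptw : ∀ x, lam * (u x * (starRingEnd ℂ) (u x)) =
      -(δ : ℂ)^2 * (U4 x * (starRingEnd ℂ) (u x)) + U2 x * (starRingEnd ℂ) (u x)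
        + (c : ℂ) * (U1 x * (starRingEnd ℂ) (u x))
        + (b x : ℂ) * (u x * (starRingEnd ℂ) (u x)) := by
    intro x
    have h := hode x
    rw [← iteratedDeriv_one] at h
    calc lam * (u x * (starRingEnd ℂ) (u x)) = (lam * u x) * (starRingEnd ℂ) (u x) := by ring
    _ = _ := by rw [← h, ← hU1]; ring
  have hBc : ∫ x, (b x : ℂ) * (u x * (starRingEnd ℂ) (u x)) = (B : ℂ) := by
    simp_rw [Complex.mul_conj, ← Complex.ofReal_mul]; exact integral_ofReal
  have hmain : lam = -(δ : ℂ)^2 * (I2 : ℂ) + (-(I1 : ℂ)) + (c : ℂ) * P + (B : ℂ) := by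
    have lhs : ∫ x, lam * (u x * (starRingEnd ℂ) (u x)) = lam := by
      rw [integral_const_mul, e00, mul_one]
    rw [← lhs]
    calc ∫ x, lam * (u x * (starRingEnd ℂ) (u x))
        = ∫ x, (-(δ : ℂ)^2 * (U4 x * (starRingEnd ℂ) (u x)) + U2 x * (starRingEnd ℂ) (u x)
            + (c : ℂ) * (U1 x * (starRingEnd ℂ) (u x))
            + (b x : ℂ) * (u x * (starRingEnd ℂ) (u x))) :=
          integral_congr_ae (Filter.Eventually.of_forall hptw)
    _ = -(δ : ℂ)^2 * (I2 : ℂ) + (-(I1 : ℂ)) + (c : ℂ) * P + (B : ℂ) := by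
          have g4 : Integrable (fun x => -(δ : ℂ)^2 * (U4 x * (starRingEnd ℂ) (u x))) volume :=
            A4.const_mul _
          have g1 : Integrable (fun x => (c : ℂ) * (U1 x * (starRingEnd ℂ) (u x))) volume :=
            A1.const_mul _
          have s1 : Integrable (fun x => -(δ : ℂ)^2 * (U4 x * (starRingEnd ℂ) (u x))
              + U2 x * (starRingEnd ℂ) (u x)) volume := g4.add A2
          have s2 : Integrable (fun x => -(δ : ℂ)^2 * (U4 x * (starRingEnd ℂ) (u x))
              + U2 x * (starRingEnd ℂ) (u x)
              + (c : ℂ) * (U1 x * (starRingEnd ℂ) (u x))) volume := s1.add g1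
          rw [integral_add s2 Ab, integral_add s1 g1, integral_add g4 A2,
            integral_const_mul, integral_const_mul, h40, h20, hBc, ← hP]
  have hmain' : lam = ((-δ^2 * I2 - I1 + B : ℝ) : ℂ) + (c : ℂ) * P := by
    rw [hmain]; push_cast; ring
  have hre : lam.re = -δ^2 * I2 - I1 + B := by
    rw [hmain', Complex.add_re, Complex.ofReal_re, Complex.mul_re, Complex.ofReal_re,
      Complex.ofReal_im, hPre]
    ring
  have him : lam.im = c * P.im := by
    rw [hmain', Complex.add_im, Complex.ofReal_im, Complex.mul_im, Complex.ofReal_re,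
      Complex.ofReal_im]
    ring
  -- nonnegativity and bound on B
  have hI1nn : 0 ≤ I1 := integral_nonneg fun x => Complex.normSq_nonneg _
  have hI2nn : 0 ≤ I2 := integral_nonneg fun x => Complex.normSq_nonneg _
  have In0 : Integrable (fun x => Complex.normSq (u x)) volume := by
    have h := A0.re
    refine h.congr (Filter.Eventually.of_forall fun x => ?_)
    simp [Complex.mul_conj, RCLike.re_to_complex]
  have In1 : Integrable (fun x => Complex.normSq (U1 x)) volume := by
    have h := (int_mul_conj m1 m1).re
    refine h.congr (Filter.Eventually.of_forall fun x => ?_)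
    simp [Complex.mul_conj, RCLike.re_to_complex]
  have hBM : B ≤ M := by
    have hle : B ≤ ∫ x, M * Complex.normSq (u x) := by
      refine integral_mono ?_ (In0.const_mul M) fun x => ?_
      · refine In0.bdd_mul (c := M) hb.aestronglyMeasurable (Filter.Eventually.of_forall fun x => ?_)
        simpa [Real.norm_eq_abs] using hbM x
      · exact mul_le_mul_of_nonneg_right ((le_abs_self _).trans (hbM x))
          (Complex.normSq_nonneg _)
    rwa [integral_const_mul, hN, mul_one] at hle
  -- Cauchy–Schwarz via the t-trick
  have Kint : Integrable (fun x => ‖U1 x‖ * ‖u x‖) volume := by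
    have h := A1.norm
    refine h.congr (Filter.Eventually.of_forall fun x => ?_)
    simp [map_mul]
  have hPK : |P.im| ≤ ∫ x, ‖U1 x‖ * ‖u x‖ := by
    calc |P.im| ≤ ‖P‖ := Complex.abs_im_le_norm P
    _ = ‖P‖ := rfl
    _ ≤ ∫ x, ‖U1 x * (starRingEnd ℂ) (u x)‖ := norm_integral_le_integral_norm _
    _ = ∫ x, ‖U1 x‖ * ‖u x‖ := by
        refine integral_congr_ae (Filter.Eventually.of_forall fun x => ?_)
        simp [map_mul]
  have habs : ∀ t : ℝ, 0 < t → |P.im| ≤ (t * I1 + t⁻¹) / 2 := by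
    intro t ht
    refine hPK.trans ?_
    have hle : ∫ x, ‖U1 x‖ * ‖u x‖
        ≤ ∫ x, (t * Complex.normSq (U1 x) + t⁻¹ * Complex.normSq (u x)) / 2 := by
      refine integral_mono Kint (((In1.const_mul t).add (In0.const_mul t⁻¹)).div_const 2)
        fun x => ?_
      have h1 : t * t⁻¹ = 1 := mul_inv_cancel₀ ht.ne'
      have ha : (0:ℝ) ≤ ‖U1 x‖ := norm_nonneg _
      have hb2 : (0:ℝ) ≤ ‖u x‖ := norm_nonneg _
      have hn1 : Complex.normSq (U1 x) = ‖U1 x‖ ^ 2 := (Complex.sq_norm _).symm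
      have hn0 : Complex.normSq (u x) = ‖u x‖ ^ 2 := (Complex.sq_norm _).symm
      rw [hn1, hn0]
      rw [le_div_iff₀ (by norm_num : (0:ℝ) < 2)]
      nlinarith [sq_nonneg (t * ‖U1 x‖ - ‖u x‖), ht,
        mul_pos ht ht, sq_nonneg (‖U1 x‖)]
    calc (∫ x, ‖U1 x‖ * ‖u x‖)
        ≤ ∫ x, (t * Complex.normSq (U1 x) + t⁻¹ * Complex.normSq (u x)) / 2 := hle
    _ = (t * I1 + t⁻¹) / 2 := by
        rw [integral_div, integral_add (In1.const_mul t) (In0.const_mul t⁻¹),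
          integral_const_mul, integral_const_mul, hN, mul_one]
  have hPim2 : P.im ^ 2 ≤ I1 := by
    rcases eq_or_lt_of_le hI1nn with h0 | hpos
    · have hP0 : P.im = 0 := by
        by_contra h
        have habspos : 0 < |P.im| := abs_pos.mpr h
        have := habs |P.im|⁻¹ (inv_pos.mpr habspos)
        rw [← h0, mul_zero, zero_add, inv_inv] at this
        linarith
      rw [hP0]; simpa using hI1nn
    · set s := Real.sqrt I1 with hs
      have hspos : 0 < s := Real.sqrt_pos.mpr hpos
      have hss : s * s = I1 := Real.mul_self_sqrt hI1nn
      have hb1 := habs s⁻¹ (inv_pos.mpr hspos)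
      have h2 : s⁻¹ * I1 = s := by
        rw [← hss]; field_simp
      rw [h2, inv_inv] at hb1
      have hPle : |P.im| ≤ s := by linarith
      nlinarith [abs_nonneg P.im, _root_.sq_abs P.im]
  -- conclusion
  constructor
  · rw [hre]; nlinarith [sq_nonneg δ]
  · have h1 : c ^ 2 * P.im ^ 2 ≤ c ^ 2 * I1 :=
      mul_le_mul_of_nonneg_left hPim2 (sq_nonneg c)
    have h2 : I1 ≤ M - lam.re := by rw [hre]; nlinarith [sq_nonneg δ]
    have h3 : c ^ 2 * I1 ≤ c ^ 2 * (M - lam.re) :=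
      mul_le_mul_of_nonneg_left h2 (sq_nonneg c)
    calc lam.im ^ 2 = c ^ 2 * P.im ^ 2 := by rw [him]; ring
    _ ≤ c ^ 2 * (M - lam.re) := h1.trans h3
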